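/- If the Anderson ring R[X]_A is a principal ideal ring of Krull dimension 1, then R is a principal ideal ring of Krull dimension 0. -/

import Mathlib

open Polynomial

/-- The multiplicative set `A = {f ∈ R[X] : f(0) = 1}` of polynomials
with constant term `1`. -/
def andersonSubmonoid (R : Type*) [CommRing R] : Submonoid (Polynomial R) where
  carrier := {f | f.coeff 0 = 1}
  one_mem' := by simp
  mul_mem' := by
    intro a b ha hb
    simp only [Set.mem_setOf_eq, Polynomial.mul_coeff_zero] at *
    rw [ha, hb, mul_one]

/-- The Anderson ring `R[X]_A`, the localization of `R[X]` at `A`. -/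
abbrev AndersonRing (R : Type*) [CommRing R] := Localization (andersonSubmonoid R)

/-- The canonical ring homomorphism `R → R[X]_A`. -/
noncomputable def andersonMap (R : Type*) [CommRing R] : R →+* AndersonRing R :=
  (algebraMap (Polynomial R) (AndersonRing R)).comp Polynomial.C

/-- The retraction `R[X]_A → R` induced by evaluation at 0. -/
noncomputable def andersonRetract (R : Type*) [CommRing R] : AndersonRing R →+* R :=
  IsLocalization.lift (M := andersonSubmonoid R) (g := Polynomial.constantCoeff)
    (fun y => by
      have : Polynomial.constantCoeff (y : Polynomial R) = 1 := y.2
      rw [this]; exact isUnit_one)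

lemma andersonRetract_surjective (R : Type*) [CommRing R] :
    Function.Surjective (andersonRetract R) := by
  intro r
  refine ⟨algebraMap (Polynomial R) (AndersonRing R) (Polynomial.C r), ?_⟩
  rw [andersonRetract, IsLocalization.lift_eq]
  simp

/-- No strict chain of primes in R. -/
lemma anderson_no_chain (R : Type*) [CommRing R]
    (h2 : ringKrullDim (AndersonRing R) = 1)
    (p q : Ideal R) (hp : p.IsPrime) (hq : q.IsPrime) (hpq : p < q) : False := by
  set M := andersonSubmonoid R
  set S := AndersonRing R
  -- three primes in R[X]
  set P0 : Ideal (Polynomial R) := Ideal.map Polynomial.C p with hP0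
  set P1 : Ideal (Polynomial R) := Ideal.map Polynomial.C q with hP1
  set P2 : Ideal (Polynomial R) := Ideal.comap Polynomial.constantCoeff q with hP2
  have hP0p : P0.IsPrime := (Ideal.isPrime_map_C_iff_isPrime p).mpr hp
  have hP1p : P1.IsPrime := (Ideal.isPrime_map_C_iff_isPrime q).mpr hq
  have hP2p : P2.IsPrime := Ideal.IsPrime.comap _
  have h01 : P0 < P1 := by
    obtain ⟨c, hcq, hcp⟩ := SetLike.exists_of_lt hpq
    refine lt_of_le_of_ne (Ideal.map_mono hpq.le) (fun h => ?_)
    have : Polynomial.C c ∈ P0 := by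
      rw [h]; exact Ideal.mem_map_of_mem _ hcq
    rw [hP0, Ideal.mem_map_C_iff] at this
    exact hcp (by simpa using this 0)
  have h12 : P1 < P2 := by
    refine lt_of_le_of_ne ?_ (fun h => ?_)
    · intro f hf
      rw [hP1, Ideal.mem_map_C_iff] at hf
      simpa [hP2, Ideal.mem_comap, Polynomial.constantCoeff_apply] using hf 0
    · have : (Polynomial.X : Polynomial R) ∈ P2 := by
        simp [hP2, Ideal.mem_comap]
      rw [← h, hP1, Ideal.mem_map_C_iff] at this
      have h1 := this 1
      simp at h1
      exact hq.ne_top (Ideal.eq_top_iff_one _ |>.mpr h1)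
  have hd2 : Disjoint (M : Set (Polynomial R)) (P2 : Set (Polynomial R)) := by
    rw [Set.disjoint_left]
    intro f hfM hfP
    have : (1 : R) ∈ q := by
      have := hfP
      rw [SetLike.mem_coe, hP2, Ideal.mem_comap] at this
      rwa [show Polynomial.constantCoeff f = 1 from hfM] at this
    exact hq.ne_top (Ideal.eq_top_iff_one _ |>.mpr this)
  have hd1 : Disjoint (M : Set (Polynomial R)) (P1 : Set (Polynomial R)) :=
    hd2.mono_right (by exact_mod_cast h12.le)
  have hd0 : Disjoint (M : Set (Polynomial R)) (P0 : Set (Polynomial R)) :=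
    hd1.mono_right (by exact_mod_cast h01.le)
  -- map to the localization
  have key : ∀ (P P' : Ideal (Polynomial R)), P.IsPrime → P'.IsPrime →
      Disjoint (M : Set (Polynomial R)) (P : Set (Polynomial R)) →
      Disjoint (M : Set (Polynomial R)) (P' : Set (Polynomial R)) →
      P < P' → Ideal.map (algebraMap (Polynomial R) S) P < Ideal.map (algebraMap (Polynomial R) S) P' := by
    intro P P' hPp hP'p hdP hdP' hlt
    refine lt_of_le_of_ne (Ideal.map_mono hlt.le) (fun h => ?_)
    have h1 := IsLocalization.comap_map_of_isPrime_disjoint M S hPp hdP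
    have h2' := IsLocalization.comap_map_of_isPrime_disjoint M S hP'p hdP'
    rw [← h1, ← h2', h] at hlt
    exact lt_irrefl _ hlt
  set Q0 : PrimeSpectrum S := ⟨Ideal.map (algebraMap (Polynomial R) S) P0,
    IsLocalization.isPrime_of_isPrime_disjoint M S P0 hP0p hd0⟩
  set Q1 : PrimeSpectrum S := ⟨Ideal.map (algebraMap (Polynomial R) S) P1,
    IsLocalization.isPrime_of_isPrime_disjoint M S P1 hP1p hd1⟩
  set Q2 : PrimeSpectrum S := ⟨Ideal.map (algebraMap (Polynomial R) S) P2,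
    IsLocalization.isPrime_of_isPrime_disjoint M S P2 hP2p hd2⟩
  have hQ01 : Q0 < Q1 := key P0 P1 hP0p hP1p hd0 hd1 h01
  have hQ12 : Q1 < Q2 := key P1 P2 hP1p hP2p hd1 hd2 h12
  -- length-2 chain
  let c : LTSeries (PrimeSpectrum S) :=
    ⟨2, ![Q0, Q1, Q2], by
      intro i
      fin_cases i
      · exact hQ01
      · exact hQ12⟩
  have := Order.LTSeries.length_le_krullDim c
  rw [show Order.krullDim (PrimeSpectrum S) = ringKrullDim S from rfl, h2] at this
  norm_num [c] at this

/-- If the Anderson ring `R[X]_A` is a one-dimensional principal ideal ring,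
then `R` is a zero-dimensional principal ideal ring. -/
theorem anderson_pir_dim_one (R : Type*) [CommRing R]
    (h1 : IsPrincipalIdealRing (AndersonRing R))
    (h2 : ringKrullDim (AndersonRing R) = 1) :
    IsPrincipalIdealRing R ∧ ringKrullDim R = 0 := by
  have hsurj := andersonRetract_surjective R
  have hpir : IsPrincipalIdealRing R := IsPrincipalIdealRing.of_surjective (andersonRetract R) hsurj
  refine ⟨hpir, ?_⟩
  have hnt : Nontrivial R := by
    by_contra h
    rw [not_nontrivial_iff_subsingleton] at h
    have hs : Subsingleton (AndersonRing R) := by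
      rw [← subsingleton_iff_zero_eq_one]
      have h01 : (0 : Polynomial R) = 1 := Subsingleton.elim _ _
      calc (0 : AndersonRing R) = algebraMap (Polynomial R) (AndersonRing R) 0 := by simp
        _ = algebraMap (Polynomial R) (AndersonRing R) 1 := by rw [h01]
        _ = 1 := by simp
    rw [ringKrullDim_eq_bot_of_subsingleton] at h2
    simp at h2
  refine le_antisymm ?_ (ringKrullDim_nonneg_of_nontrivial (R := R))
  rw [ringKrullDim]
  refine iSup_le fun c => ?_
  rcases Nat.eq_zero_or_pos c.length with h0 | h0
  · simp [h0]
  · exfalso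
    have hstep := c.step ⟨0, h0⟩
    exact anderson_no_chain R h2 _ _ (c _).isPrime (c _).isPrime hstep
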